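/- arXiv:2310.14062 — 3 statements merged into one kernel-verified Lean document; each statement's English description precedes it below -/
import Mathlib

section
/- Let R(ρ) = σ_W²·((√(1−ρ²) + (π − arccos ρ)·ρ)/π) + c, where σ_W² < 1 and c ∈ ℝ is a constant. Then for all ρ ∈ [−1, 1], the derivative of R satisfies |R'(ρ)| = σ_W²·(1 − arccos(ρ)/π) ≤ σ_W² < 1. -/
open Real Set

/-- The derivative of the dual-activation map for normalized ReLU with input
injection is `σ_W² · (1 − arccos ρ / π)`, which is at most `σ_W² < 1` in absolute
value on the open interval `(−1, 1)`. -/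
theorem stmt_0 (sW c : ℝ) (hsW0 : 0 ≤ sW) (hsW1 : sW < 1)
    (R : ℝ → ℝ)
    (hR : ∀ ρ, R ρ = sW * ((Real.sqrt (1 - ρ ^ 2) + (π - Real.arccos ρ) * ρ) / π) + c) :
    ∀ ρ ∈ Set.Ioo (-1 : ℝ) 1,
      HasDerivAt R (sW * (1 - Real.arccos ρ / π)) ρ ∧
      |sW * (1 - Real.arccos ρ / π)| ≤ sW ∧ sW < 1 := by
  intro ρ hρ
  obtain ⟨h1, h2⟩ := hρ
  have hne1 : ρ ≠ 1 := ne_of_lt h2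
  have hnem1 : ρ ≠ -1 := ne_of_gt h1
  have hpos : 0 < 1 - ρ ^ 2 := by nlinarith
  have hsqrt : Real.sqrt (1 - ρ ^ 2) ≠ 0 := by positivity
  have hspos : 0 < Real.sqrt (1 - ρ ^ 2) := by positivity
  -- derivative of sqrt(1 - x^2)
  have hd1 : HasDerivAt (fun x : ℝ => Real.sqrt (1 - x ^ 2))
      (-(2 * ρ) / (2 * Real.sqrt (1 - ρ ^ 2))) ρ := by
    have h : HasDerivAt (fun x : ℝ => 1 - x ^ 2) (-(2 * ρ)) ρ := by
      have := ((hasDerivAt_pow 2 ρ).const_sub 1)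
      simpa using this
    exact h.sqrt (ne_of_gt hpos)
  -- derivative of arccos
  have harccos := Real.hasDerivAt_arccos hnem1 hne1
  -- derivative of (π - arccos x) * x
  have hd2 : HasDerivAt (fun x : ℝ => (π - Real.arccos x) * x)
      ((1 / Real.sqrt (1 - ρ ^ 2)) * ρ + (π - Real.arccos ρ) * 1) ρ := by
    have hsub : HasDerivAt (fun x : ℝ => π - Real.arccos x) (1 / Real.sqrt (1 - ρ ^ 2)) ρ := by
      simpa using harccos.const_sub π
    exact hsub.mul (hasDerivAt_id ρ)
  have hd : HasDerivAt R (sW * (1 - Real.arccos ρ / π)) ρ := by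
    have hsum := ((hd1.add hd2).div_const π).const_mul sW |>.add_const c
    have heq : (fun x : ℝ => sW * ((Real.sqrt (1 - x ^ 2) + (π - Real.arccos x) * x) / π) + c)
        = R := by funext x; rw [hR x]
    simp only [Pi.add_apply] at hsum; rw [heq] at hsum
    refine hsum.congr_deriv ?_
    have hπ : (π : ℝ) ≠ 0 := Real.pi_ne_zero
    field_simp
    ring
  refine ⟨hd, ?_, hsW1⟩
  have ha0 : 0 ≤ Real.arccos ρ := Real.arccos_nonneg ρ
  have ha1 : Real.arccos ρ ≤ π := Real.arccos_le_pi ρ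
  have hπ : (0 : ℝ) < π := Real.pi_pos
  have hfrac0 : 0 ≤ 1 - Real.arccos ρ / π := by
    have : Real.arccos ρ / π ≤ 1 := by
      rw [div_le_one hπ]; exact ha1
    linarith
  have hfrac1 : 1 - Real.arccos ρ / π ≤ 1 := by
    have : 0 ≤ Real.arccos ρ / π := div_nonneg ha0 hπ.le
    linarith
  rw [abs_of_nonneg (by positivity)]
  nlinarith
end

section
/- Let R(ρ) = σ_W²·((√(1−ρ²) + (π − arccos ρ)·ρ)/π) + c with 0 < σ_W² < 1. Then R is a contraction on the interval [−1, c'] for any c' < 1 (i.e., |R(ρ) − R(ρ')| ≤ L·|ρ − ρ'| with L = σ_W²·(1 − arccos(c')/π) < 1 for all ρ, ρ' ∈ [−1, c']). -/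
open Real Set

/-- The dual-activation map `R` for normalized ReLU with input injection is a
contraction on `[−1, c']` for any `c' < 1`, with Lipschitz constant
`L = σ_W² · (1 − arccos c' / π) < 1`. -/
theorem stmt_1 (sW c c' : ℝ) (hsW0 : 0 < sW) (hsW1 : sW < 1) (hc' : c' < 1)
    (R : ℝ → ℝ)
    (hR : ∀ ρ, R ρ = sW * ((Real.sqrt (1 - ρ ^ 2) + (π - Real.arccos ρ) * ρ) / π) + c) :
    (∀ ρ ∈ Set.Icc (-1 : ℝ) c', ∀ ρ' ∈ Set.Icc (-1 : ℝ) c',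
      |R ρ - R ρ'| ≤ sW * (1 - Real.arccos c' / π) * |ρ - ρ'|) ∧
    sW * (1 - Real.arccos c' / π) < 1 := by
  have hRe : R = fun ρ => sW * ((Real.sqrt (1 - ρ ^ 2) + (π - Real.arccos ρ) * ρ) / π) + c :=
    funext hR
  subst hRe
  have hπ : (0:ℝ) < π := Real.pi_pos
  set L : ℝ := sW * (1 - Real.arccos c' / π) with hLdef
  have hL0 : 0 ≤ L := by
    have h1 : Real.arccos c' ≤ π := Real.arccos_le_pi c'
    have : Real.arccos c' / π ≤ 1 := by rw [div_le_one hπ]; exact h1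
    have : 0 ≤ 1 - Real.arccos c' / π := by linarith
    positivity
  constructor
  · have key : ∀ a b : ℝ, a ∈ Icc (-1:ℝ) c' → b ∈ Icc (-1:ℝ) c' → a < b →
        |(sW * ((Real.sqrt (1 - b ^ 2) + (π - Real.arccos b) * b) / π) + c) -
          (sW * ((Real.sqrt (1 - a ^ 2) + (π - Real.arccos a) * a) / π) + c)| ≤ L * |b - a| := by
      intro a b ha hb hab
      set f : ℝ → ℝ := fun ρ => sW * ((Real.sqrt (1 - ρ ^ 2) + (π - Real.arccos ρ) * ρ) / π) + c
        with hf
      have hcont : ContinuousOn f (Icc a b) := by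
        apply Continuous.continuousOn
        have h1 : Continuous fun ρ : ℝ => Real.sqrt (1 - ρ ^ 2) :=
          Real.continuous_sqrt.comp (by continuity)
        have h2 : Continuous fun ρ : ℝ => (π - Real.arccos ρ) * ρ :=
          ((continuous_const.sub Real.continuous_arccos).mul continuous_id)
        exact ((continuous_const.mul ((h1.add h2).div_const π)).add continuous_const)
      have hderiv : ∀ x ∈ Ioo a b, HasDerivAt f (sW * (1 - Real.arccos x / π)) x := by
        intro x hx
        have hx1 : -1 < x := lt_of_le_of_lt ha.1 hx.1
        have hx2 : x < 1 := lt_of_lt_of_le (lt_of_lt_of_le hx.2 hb.2) (le_of_lt hc')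
        have hs : (0:ℝ) < 1 - x ^ 2 := by nlinarith
        have hsq : (0:ℝ) < Real.sqrt (1 - x ^ 2) := Real.sqrt_pos.mpr hs
        have d0 : HasDerivAt (fun ρ : ℝ => 1 - ρ ^ 2) (-(2 * x)) x := by
          have := (hasDerivAt_pow 2 x).const_sub (1:ℝ)
          simpa using this
        have d1 : HasDerivAt (fun ρ : ℝ => Real.sqrt (1 - ρ ^ 2))
            (1 / (2 * Real.sqrt (1 - x ^ 2)) * -(2 * x)) x :=
          (Real.hasDerivAt_sqrt (ne_of_gt hs)).comp x d0
        have d2 : HasDerivAt (fun ρ : ℝ => (π - Real.arccos ρ) * ρ)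
            ((1 / Real.sqrt (1 - x ^ 2)) * x + (π - Real.arccos x) * 1) x := by
          have harc : HasDerivAt (fun ρ : ℝ => π - Real.arccos ρ)
              (1 / Real.sqrt (1 - x ^ 2)) x := by
            have := (Real.hasDerivAt_arccos (ne_of_gt hx1) (ne_of_lt hx2)).const_sub π
            simpa using this
          exact harc.mul (hasDerivAt_id x)
        have dsum := ((d1.add d2).div_const π).const_mul sW
        have dtot := dsum.add_const c
        refine dtot.congr_deriv ?_
        have hπ' : π ≠ 0 := ne_of_gt hπ
        have hs0 : Real.sqrt (1 - x ^ 2) ≠ 0 := ne_of_gt hsq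
        field_simp
        ring
      obtain ⟨ξ, hξ, hslope⟩ := exists_hasDerivAt_eq_slope f _ hab hcont hderiv
      have hba : (0:ℝ) < b - a := by linarith
      have heq : f b - f a = sW * (1 - Real.arccos ξ / π) * (b - a) := by
        rw [hslope]; field_simp
      have hbound : |sW * (1 - Real.arccos ξ / π)| ≤ L := by
        have hξc : ξ ≤ c' := le_trans (le_of_lt hξ.2) hb.2
        have hξ1 : -1 ≤ ξ := le_trans ha.1 (le_of_lt hξ.1)
        have hmono : Real.arccos c' ≤ Real.arccos ξ := by
          unfold Real.arccos
          have := Real.monotone_arcsin hξc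
          linarith
        have hpi : Real.arccos ξ ≤ π := Real.arccos_le_pi ξ
        have h1 : 0 ≤ 1 - Real.arccos ξ / π := by
          have : Real.arccos ξ / π ≤ 1 := by rw [div_le_one hπ]; exact hpi
          linarith
        rw [abs_of_nonneg (by positivity)]
        have : Real.arccos c' / π ≤ Real.arccos ξ / π :=
          by gcongr
        have h2 : 1 - Real.arccos ξ / π ≤ 1 - Real.arccos c' / π := by linarith
        exact mul_le_mul_of_nonneg_left h2 (le_of_lt hsW0)
      calc |f b - f a| = |sW * (1 - Real.arccos ξ / π)| * |b - a| := by
            rw [heq, abs_mul]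
        _ ≤ L * |b - a| := mul_le_mul_of_nonneg_right hbound (abs_nonneg _)
    intro ρ hρ ρ' hρ'
    rcases lt_trichotomy ρ ρ' with h | h | h
    · rw [abs_sub_comm ρ ρ', abs_sub_comm]
      exact key ρ ρ' hρ hρ' h
    · simp [h]
    · exact key ρ' ρ hρ' hρ h
  · have h2 : 0 < Real.arccos c' := Real.arccos_pos.mpr hc'
    have h3 : 0 < Real.arccos c' / π := div_pos h2 hπ
    have h4 : Real.arccos c' / π ≤ 1 := by
      rw [div_le_one hπ]; exact Real.arccos_le_pi c'
    nlinarith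
end

section
/- For (u,v) jointly Gaussian with mean zero, unit variances, and correlation ρ ∈ [−1,1], and σ(t) = √2·max(0,t) the normalized ReLU, one has E[σ(u)σ(v)] = (√(1−ρ²) + (π − arccos ρ)·ρ)/π. -/
open Real MeasureTheory ProbabilityTheory Filter
open scoped NNReal ENNReal Topology

lemma gauss_prod_eq :
    (gaussianReal 0 1).prod (gaussianReal 0 1) =
      (volume.prod volume : Measure (ℝ × ℝ)).withDensity
        (fun p => gaussianPDF 0 1 p.1 * gaussianPDF 0 1 p.2) := by
  refine Measure.prod_eq fun s t hs ht => ?_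
  rw [withDensity_apply _ (hs.prod ht), ← Measure.prod_restrict,
      lintegral_prod_mul (measurable_gaussianPDF 0 1).aemeasurable
        (measurable_gaussianPDF 0 1).aemeasurable,
      gaussianReal_apply 0 one_ne_zero s, gaussianReal_apply 0 one_ne_zero t]

lemma gauss_integral_eq (h : ℝ × ℝ → ℝ) :
    ∫ z, h z ∂((gaussianReal 0 1).prod (gaussianReal 0 1)) =
      ∫ p : ℝ × ℝ, (gaussianPDFReal 0 1 p.1 * gaussianPDFReal 0 1 p.2) * h p
        ∂(volume.prod volume) := by
  rw [gauss_prod_eq]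
  have h1 : (fun p : ℝ × ℝ => gaussianPDF 0 1 p.1 * gaussianPDF 0 1 p.2) =
      fun p : ℝ × ℝ => (((gaussianPDFReal 0 1 p.1).toNNReal * (gaussianPDFReal 0 1 p.2).toNNReal : ℝ≥0) : ℝ≥0∞) := by
    ext p
    simp [gaussianPDF, ENNReal.ofReal, ENNReal.coe_mul]
  have hm : Measurable fun p : ℝ × ℝ =>
      ((gaussianPDFReal 0 1 p.1).toNNReal * (gaussianPDFReal 0 1 p.2).toNNReal : ℝ≥0) :=
    (((measurable_gaussianPDFReal 0 1).comp measurable_fst).real_toNNReal).mul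
      (((measurable_gaussianPDFReal 0 1).comp measurable_snd).real_toNNReal)
  rw [h1, integral_withDensity_eq_integral_smul hm]
  congr 1
  ext p
  rw [NNReal.smul_def, NNReal.coe_mul, Real.coe_toNNReal _ (gaussianPDFReal_nonneg _ _ _),
    Real.coe_toNNReal _ (gaussianPDFReal_nonneg _ _ _), smul_eq_mul]

lemma radial_integral : ∫ r in Set.Ioi (0:ℝ), r ^ 3 * rexp (-(r ^ 2 / 2)) = 2 := by
  have hderiv : ∀ x ∈ Set.Ioi (0:ℝ),
      HasDerivAt (fun r : ℝ => -((r ^ 2 + 2) * rexp (-(r ^ 2 / 2))))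
        (x ^ 3 * rexp (-(x ^ 2 / 2))) x := by
    intro x _
    have h1 : HasDerivAt (fun r : ℝ => r ^ 2 + 2) (2 * x) x := by
      simpa using (hasDerivAt_pow 2 x).add_const 2
    have h2 : HasDerivAt (fun r : ℝ => rexp (-(r ^ 2 / 2)))
        (rexp (-(x ^ 2 / 2)) * -(2 * x / 2)) x := by
      simpa using (((hasDerivAt_pow 2 x).div_const 2).neg).exp
    have := (h1.mul h2).neg
    refine this.congr_deriv ?_
    ring
  have hpos : ∀ x ∈ Set.Ioi (0:ℝ), 0 ≤ x ^ 3 * rexp (-(x ^ 2 / 2)) := fun x hx =>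
    mul_nonneg (pow_nonneg (le_of_lt hx) 3) (exp_nonneg _)
  have htend : Tendsto (fun r : ℝ => -((r ^ 2 + 2) * rexp (-(r ^ 2 / 2)))) atTop (𝓝 0) := by
    have h0 : Tendsto (fun u : ℝ => -((2 * u + 2) * rexp (-u))) atTop (𝓝 0) := by
      have ha : Tendsto (fun u : ℝ => 2 * (u ^ 1 * rexp (-u)) + 2 * (u ^ 0 * rexp (-u)))
          atTop (𝓝 (2 * 0 + 2 * 0)) :=
        ((tendsto_pow_mul_exp_neg_atTop_nhds_zero 1).const_mul 2).add
          ((tendsto_pow_mul_exp_neg_atTop_nhds_zero 0).const_mul 2)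
      have := ha.neg
      simpa [pow_one, pow_zero, mul_comm, mul_add, mul_assoc, neg_add] using this.congr (by
        intro u; ring)
    have hsq : Tendsto (fun r : ℝ => r ^ 2 / 2) atTop atTop :=
      (tendsto_pow_atTop (two_ne_zero)).atTop_div_const two_pos
    have := h0.comp hsq
    refine this.congr fun r => ?_
    simp only [Function.comp]
    ring_nf
  have key := integral_Ioi_of_hasDerivAt_of_nonneg ((Continuous.neg (by fun_prop)).continuousWithinAt) hderiv hpos htend
  rw [key]
  norm_num

lemma angular_integral (α : ℝ) (h0 : 0 ≤ α) (h1 : α ≤ π) :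
    ∫ θ in Set.Ioo (-π) π, max 0 (cos θ) * max 0 (cos (θ - α)) =
      ((π - α) * cos α + sin α) / 2 := by
  have hG : Continuous fun θ : ℝ => max 0 (cos θ) * max 0 (cos (θ - α)) := by fun_prop
  have hpi : (0:ℝ) < π := pi_pos
  have hab : -π ≤ α - π / 2 := by linarith [pi_pos]
  have hbc : α - π / 2 ≤ π / 2 := by linarith
  have hcd : π / 2 ≤ π := by linarith
  rw [← integral_Ioc_eq_integral_Ioo, ← intervalIntegral.integral_of_le (by linarith : -π ≤ π)]
  have hsplit1 : ∫ θ in (-π)..(π), max 0 (cos θ) * max 0 (cos (θ - α)) =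
      (∫ θ in (-π)..(α - π/2), max 0 (cos θ) * max 0 (cos (θ - α))) +
      (∫ θ in (α - π/2)..(π/2), max 0 (cos θ) * max 0 (cos (θ - α))) +
      (∫ θ in (π/2)..(π), max 0 (cos θ) * max 0 (cos (θ - α))) := by
    rw [intervalIntegral.integral_add_adjacent_intervals (hG.intervalIntegrable _ _) (hG.intervalIntegrable _ _),
      intervalIntegral.integral_add_adjacent_intervals (hG.intervalIntegrable _ _) (hG.intervalIntegrable _ _)]
  rw [hsplit1]
  have hleft : ∫ θ in (-π)..(α - π/2), max 0 (cos θ) * max 0 (cos (θ - α)) = 0 := by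
    rw [← intervalIntegral.integral_zero (a := -π) (b := α - π/2) (μ := volume) (E := ℝ)]
    apply intervalIntegral.integral_congr
    intro θ hθ
    rw [Set.uIcc_of_le hab] at hθ
    obtain ⟨hθ1, hθ2⟩ := hθ
    rcases le_or_gt θ (-(π/2)) with hc | hc
    · have : cos θ ≤ 0 := by
        rw [← Real.cos_neg]
        apply Real.cos_nonpos_of_pi_div_two_le_of_le <;> linarith
      simp [max_eq_left this]
    · have : cos (θ - α) ≤ 0 := by
        rw [← Real.cos_neg, neg_sub]
        apply Real.cos_nonpos_of_pi_div_two_le_of_le <;> linarith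
      simp [max_eq_left this]
  have hright : ∫ θ in (π/2)..(π), max 0 (cos θ) * max 0 (cos (θ - α)) = 0 := by
    rw [← intervalIntegral.integral_zero (a := π/2) (b := π) (μ := volume) (E := ℝ)]
    apply intervalIntegral.integral_congr
    intro θ hθ
    rw [Set.uIcc_of_le hcd] at hθ
    have : cos θ ≤ 0 := Real.cos_nonpos_of_pi_div_two_le_of_le hθ.1 (by linarith [hθ.2])
    simp [max_eq_left this]
  have hmid : ∫ θ in (α - π/2)..(π/2), max 0 (cos θ) * max 0 (cos (θ - α)) =
      ((π - α) * cos α + sin α) / 2 := by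
    have e1 : ∫ θ in (α - π/2)..(π/2), max 0 (cos θ) * max 0 (cos (θ - α)) =
        ∫ θ in (α - π/2)..(π/2), cos θ * cos (θ - α) := by
      apply intervalIntegral.integral_congr
      intro θ hθ
      rw [Set.uIcc_of_le hbc] at hθ
      obtain ⟨hθ1, hθ2⟩ := hθ
      have c1 : 0 ≤ cos θ := Real.cos_nonneg_of_mem_Icc ⟨by linarith, hθ2⟩
      have c2 : 0 ≤ cos (θ - α) := Real.cos_nonneg_of_mem_Icc ⟨by linarith, by linarith⟩
      simp [max_eq_right c1, max_eq_right c2]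
    rw [e1]
    have hF : ∀ θ ∈ Set.uIcc (α - π/2) (π/2),
        HasDerivAt (fun t : ℝ => t * cos α / 2 + sin (2 * t - α) / 4)
          (cos θ * cos (θ - α)) θ := by
      intro θ _
      have d1 : HasDerivAt (fun t : ℝ => t * cos α / 2) (cos α / 2) θ := by
        simpa using ((hasDerivAt_id θ).mul_const (cos α)).div_const 2
      have d2 : HasDerivAt (fun t : ℝ => sin (2 * t - α) / 4)
          (cos (2 * θ - α) * 2 / 4) θ := by
        have : HasDerivAt (fun t : ℝ => 2 * t - α) 2 θ := by
          simpa using ((hasDerivAt_id θ).const_mul 2).sub_const α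
        simpa using (this.sin).div_const 4
      have := d1.add d2
      refine this.congr_deriv ?_
      have e2 : cos (2 * θ - α) = cos θ * cos (θ - α) - sin θ * sin (θ - α) := by
        have : 2 * θ - α = θ + (θ - α) := by ring
        rw [this, Real.cos_add]
      have e3 : cos θ * cos (θ - α) + sin θ * sin (θ - α) = cos α := by
        rw [← Real.cos_sub]
        ring_nf
      rw [e2]
      nlinarith [e3]
    rw [intervalIntegral.integral_eq_sub_of_hasDerivAt hF
      ((Real.continuous_cos.mul (by fun_prop)).intervalIntegrable _ _)]
    have s1 : sin (2 * (π/2) - α) = sin α := by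
      rw [show 2 * (π/2) - α = π - α by ring, Real.sin_pi_sub]
    have s2 : sin (2 * (α - π/2) - α) = -sin α := by
      rw [show 2 * (α - π/2) - α = -(π - α) by ring, Real.sin_neg, Real.sin_pi_sub]
    rw [s1, s2]
    ring
  rw [hleft, hright, hmid]
  ring

/-- Arc-cosine kernel identity of Cho and Saul: for `(u,v)` jointly Gaussian,
mean zero, unit variances, correlation `ρ`, and `σ(t) = √2 · max(0,t)`,
`E[σ(u)σ(v)] = (√(1−ρ²) + (π − arccos ρ)·ρ)/π`. The joint Gaussian is realized
as `(z₁, ρ·z₁ + √(1−ρ²)·z₂)` for independent standard Gaussians `z₁, z₂`. -/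

theorem stmt_3 (ρ : ℝ) (hρ : ρ ∈ Set.Icc (-1 : ℝ) 1) :
    ∫ z : ℝ × ℝ,
        (Real.sqrt 2 * max 0 z.1) *
          (Real.sqrt 2 * max 0 (ρ * z.1 + Real.sqrt (1 - ρ ^ 2) * z.2))
        ∂((gaussianReal 0 1).prod (gaussianReal 0 1)) =
      (Real.sqrt (1 - ρ ^ 2) + (π - Real.arccos ρ) * ρ) / π := by
  obtain ⟨hρ1, hρ2⟩ := hρ
  set α := Real.arccos ρ with hα
  have hα0 : 0 ≤ α := Real.arccos_nonneg ρ
  have hαπ : α ≤ π := Real.arccos_le_pi ρ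
  have hcos : Real.cos α = ρ := Real.cos_arccos hρ1 hρ2
  have hsin : Real.sin α = Real.sqrt (1 - ρ ^ 2) := Real.sin_arccos ρ
  rw [gauss_integral_eq]
  set F : ℝ × ℝ → ℝ := fun p =>
    (gaussianPDFReal 0 1 p.1 * gaussianPDFReal 0 1 p.2) *
      ((Real.sqrt 2 * max 0 p.1) *
        (Real.sqrt 2 * max 0 (ρ * p.1 + Real.sqrt (1 - ρ ^ 2) * p.2))) with hF
  have hpolar := integral_comp_polarCoord_symm F
  rw [← MeasureTheory.Measure.volume_eq_prod, ← hpolar]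
  -- now compute the set integral over polarCoord.target
  have htarget : polarCoord.target = Set.Ioi (0:ℝ) ×ˢ Set.Ioo (-π) π := rfl
  have hpoint : ∀ p ∈ polarCoord.target,
      p.1 • F (polarCoord.symm p) =
        (p.1 ^ 3 * rexp (-(p.1 ^ 2 / 2))) *
          ((2 * π)⁻¹ * (2 * (max 0 (Real.cos p.2) * max 0 (Real.cos (p.2 - α))))) := by
    rintro ⟨r, θ⟩ hp
    rw [htarget] at hp
    have hr : 0 < r := hp.1
    simp only [polarCoord_symm_apply, hF]
    have hpdf : ∀ x : ℝ, gaussianPDFReal 0 1 x = (Real.sqrt (2 * π))⁻¹ * rexp (-(x ^ 2 / 2)) := by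
      intro x
      simp only [gaussianPDFReal, NNReal.coe_one, mul_one, sub_zero, neg_div]
    rw [hpdf, hpdf]
    have hexp' : rexp (-(r * Real.cos θ) ^ 2 / 2) * rexp (-(r * Real.sin θ) ^ 2 / 2) =
        rexp (-r ^ 2 / 2) := by
      rw [← Real.exp_add]
      congr 1
      nlinarith [Real.sin_sq_add_cos_sq θ]
    have hpi : Real.sqrt π * Real.sqrt π = π := Real.mul_self_sqrt pi_pos.le
    have hmax1 : max 0 (r * Real.cos θ) = r * max 0 (Real.cos θ) := by
      rw [mul_max_of_nonneg _ _ hr.le, mul_zero]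
    have hmax2 : max 0 (ρ * (r * Real.cos θ) + Real.sqrt (1 - ρ ^ 2) * (r * Real.sin θ)) =
        r * max 0 (Real.cos (θ - α)) := by
      have harg : ρ * (r * Real.cos θ) + Real.sqrt (1 - ρ ^ 2) * (r * Real.sin θ) =
          r * Real.cos (θ - α) := by
        rw [Real.cos_sub, hcos, hsin]
        ring
      rw [harg, mul_max_of_nonneg _ _ hr.le, mul_zero]
    rw [hmax1, hmax2]
    have h2 : Real.sqrt 2 * Real.sqrt 2 = 2 := Real.mul_self_sqrt (by norm_num)
    field_simp
    have hexp2 : rexp (-(r ^ 2 * Real.cos θ ^ 2 / 2)) * rexp (-(r ^ 2 * Real.sin θ ^ 2 / 2)) =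
        rexp (-(r ^ 2 / 2)) := by
      rw [← Real.exp_add]
      congr 1
      linear_combination (-(r ^ 2 / 2)) * Real.sin_sq_add_cos_sq θ
    have hinv : π * π⁻¹ = 1 := mul_inv_cancel₀ pi_ne_zero
    rw [smul_eq_mul, Real.sq_sqrt (by positivity : (0:ℝ) ≤ 2 * π),
      Real.sq_sqrt (by norm_num : (0:ℝ) ≤ 2), div_eq_mul_inv]
    linear_combination (r ^ 3 * max 0 (Real.cos θ) * max 0 (Real.cos (θ - α)) * π * π⁻¹) * hexp2 +
      (r ^ 3 * max 0 (Real.cos θ) * max 0 (Real.cos (θ - α)) * rexp (-(r ^ 2 / 2))) * hinv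
  rw [MeasureTheory.setIntegral_congr_fun polarCoord.open_target.measurableSet hpoint,
    htarget, MeasureTheory.Measure.volume_eq_prod]
  have hprod := MeasureTheory.setIntegral_prod_mul (μ := (volume : Measure ℝ))
    (ν := (volume : Measure ℝ)) (fun r : ℝ => r ^ 3 * rexp (-(r ^ 2 / 2)))
    (fun θ : ℝ => (2 * π)⁻¹ * (2 * ((0 ⊔ Real.cos θ) * (0 ⊔ Real.cos (θ - α)))))
    (Set.Ioi 0) (Set.Ioo (-π) π)
  rw [hprod, radial_integral, MeasureTheory.integral_const_mul,
    MeasureTheory.integral_const_mul, angular_integral α hα0 hαπ, hcos, hsin]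
  have hπ : (π : ℝ) ≠ 0 := pi_ne_zero
  field_simp
  ring
end
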